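/- Let F be a field, N a natural number, and V an (N+1)-dimensional vector space over F. Let {U_i}_{i=0}^N, {U'_i}_{i=0}^N, {U''_i}_{i=0}^N be totally opposite flags on V. For each location λ = (r,s,t) in Δ_N define B_λ = U_{N−r} ∩ U'_{N−s} ∩ U''_{N−t}. Then: each B_λ is a one-dimensional subspace of V; for each line L in Δ_N the sum ∑_{λ∈L} B_λ is direct (the family (B_λ)_{λ∈L} of subspaces is independent); and for each black 3-clique C in Δ_N the sum ∑_{λ∈C} B_λ is not direct. In other words, B is a Billiard Array on V. -/
import Mathlib


/-- `Δ_N`: the set of triples of natural numbers with sum `N`. -/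
def BA.Delta (N : ℕ) : Set (Fin 3 → ℕ) := {v | v 0 + v 1 + v 2 = N}

/-- A line in `Δ_N`: the set of locations with a given `η`-coordinate `c`. -/
def BA.IsLine (N : ℕ) (L : Set (Fin 3 → ℕ)) : Prop :=
  ∃ (η : Fin 3) (c : ℕ), c ≤ N ∧ L = {v ∈ BA.Delta N | v η = c}

/-- The black 3-clique attached to `(r,s,t)`. -/
def BA.blackSet (r s t : ℕ) : Set (Fin 3 → ℕ) :=
  {![r + 1, s, t], ![r, s + 1, t], ![r, s, t + 1]}

/-- A Billiard Array on `V`: a function assigning to each location of `Δ_N` a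
one-dimensional subspace of `V`, such that the sum over each line is direct and
the sum over each black 3-clique is not direct. -/
def BA.IsBilliardArray {F V : Type*} [Field F] [AddCommGroup V] [Module F V]
    (N : ℕ) (B : (Fin 3 → ℕ) → Submodule F V) : Prop :=
  (∀ v ∈ BA.Delta N, Module.finrank F (B v) = 1) ∧
  (∀ L : Set (Fin 3 → ℕ), BA.IsLine N L → iSupIndep fun x : L => B x.1) ∧
  (∀ r s t : ℕ, r + s + t + 1 = N → ¬ iSupIndep fun x : BA.blackSet r s t => B x.1)

/-- A flag on `V` (of diameter `N`): nested subspaces `U_0 ⊆ ⋯ ⊆ U_N` with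
`dim U_i = i + 1`. -/
def BA.IsFlag {F V : Type*} [Field F] [AddCommGroup V] [Module F V]
    (N : ℕ) (U : ℕ → Submodule F V) : Prop :=
  (∀ i ≤ N, Module.finrank F (U i) = i + 1) ∧ ∀ i, i + 1 ≤ N → U i ≤ U (i + 1)

/-- Two flags are opposite whenever `U_i ∩ U'_j = 0` for `i + j < N`. -/
def BA.Opposite {F V : Type*} [Field F] [AddCommGroup V] [Module F V]
    (N : ℕ) (U U' : ℕ → Submodule F V) : Prop :=
  ∀ i j : ℕ, i ≤ N → j ≤ N → i + j < N → U i ⊓ U' j = ⊥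

/-- Three flags are totally opposite whenever
`U_{N-r} ∩ U'_{N-s} ∩ U''_{N-t} = 0` for all `r,s,t ≤ N` with `r+s+t > N`. -/
def BA.TotallyOpposite {F V : Type*} [Field F] [AddCommGroup V] [Module F V]
    (N : ℕ) (U U' U'' : ℕ → Submodule F V) : Prop :=
  ∀ r s t : ℕ, r ≤ N → s ≤ N → t ≤ N → N < r + s + t →
    U (N - r) ⊓ U' (N - s) ⊓ U'' (N - t) = ⊥

section Aux

variable {F V : Type*} [Field F] [AddCommGroup V] [Module F V]

lemma BA.flag_mono {N : ℕ} {U : ℕ → Submodule F V} (hU : BA.IsFlag N U) :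
    ∀ {i j : ℕ}, i ≤ j → j ≤ N → U i ≤ U j := by
  intro i j hij hj
  induction j with
  | zero =>
    obtain rfl : i = 0 := by omega
    exact le_rfl
  | succ n ih =>
    rcases Nat.lt_or_ge i (n + 1) with h' | h'
    · exact le_trans (ih (by omega) (by omega)) (hU.2 n hj)
    · obtain rfl : i = n + 1 := by omega
      exact le_rfl

lemma BA.finrank_ge {N : ℕ} [FiniteDimensional F V]
    (hV : Module.finrank F V = N + 1) {U U' U'' : ℕ → Submodule F V}
    (hU : BA.IsFlag N U) (hU' : BA.IsFlag N U') (hU'' : BA.IsFlag N U'')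
    (r s t : ℕ) (hr : r ≤ N) (hs : s ≤ N) (ht : t ≤ N) :
    N + 1 ≤ Module.finrank F ↥(U (N - r) ⊓ U' (N - s) ⊓ U'' (N - t)) + (r + s + t) := by
  have h1 := Submodule.finrank_sup_add_finrank_inf_eq (U (N - r)) (U' (N - s))
  have h2 := Submodule.finrank_sup_add_finrank_inf_eq (U (N - r) ⊓ U' (N - s)) (U'' (N - t))
  have e1 : Module.finrank F ↥(U (N - r)) = N - r + 1 := hU.1 _ (by omega)
  have e2 : Module.finrank F ↥(U' (N - s)) = N - s + 1 := hU'.1 _ (by omega)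
  have e3 : Module.finrank F ↥(U'' (N - t)) = N - t + 1 := hU''.1 _ (by omega)
  have b1 : Module.finrank F ↥(U (N - r) ⊔ U' (N - s)) ≤ N + 1 :=
    hV ▸ Submodule.finrank_le _
  have b2 : Module.finrank F ↥((U (N - r) ⊓ U' (N - s)) ⊔ U'' (N - t)) ≤ N + 1 :=
    hV ▸ Submodule.finrank_le _
  omega

lemma BA.finrank_le_aux {N : ℕ} [FiniteDimensional F V]
    {U U' U'' : ℕ → Submodule F V}
    (hU : BA.IsFlag N U) (hU' : BA.IsFlag N U') (hU'' : BA.IsFlag N U'')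
    (hT : BA.TotallyOpposite N U U' U'') :
    ∀ k r s t : ℕ, r ≤ N → s ≤ N → t ≤ N → N - t ≤ k →
      Module.finrank F ↥(U (N - r) ⊓ U' (N - s) ⊓ U'' (N - t)) ≤ N + 1 - (r + s + t) := by
  intro k
  induction k with
  | zero =>
    intro r s t hr hs ht hk
    by_cases hsum : N < r + s + t
    · rw [hT r s t hr hs ht hsum]
      simp
    · have hb : Module.finrank F ↥(U (N - r) ⊓ U' (N - s) ⊓ U'' (N - t)) ≤
          Module.finrank F ↥(U'' (N - t)) := Submodule.finrank_mono inf_le_right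
      have e : Module.finrank F ↥(U'' (N - t)) = N - t + 1 := hU''.1 _ (by omega)
      omega
  | succ k ih =>
    intro r s t hr hs ht hk
    by_cases hsum : N < r + s + t
    · rw [hT r s t hr hs ht hsum]
      simp
    · by_cases htN : N ≤ t
      · have hb : Module.finrank F ↥(U (N - r) ⊓ U' (N - s) ⊓ U'' (N - t)) ≤
            Module.finrank F ↥(U'' (N - t)) := Submodule.finrank_mono inf_le_right
        have e : Module.finrank F ↥(U'' (N - t)) = N - t + 1 := hU''.1 _ (by omega)
        omega
      · have ht1 : t + 1 ≤ N := by omega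
        have hmono : U'' (N - (t + 1)) ≤ U'' (N - t) := BA.flag_mono hU'' (by omega) (by omega)
        have hXsub : (U (N - r) ⊓ U' (N - s) ⊓ U'' (N - t)) ⊓ U'' (N - (t + 1)) =
            U (N - r) ⊓ U' (N - s) ⊓ U'' (N - (t + 1)) := by
          rw [inf_assoc, inf_eq_right.mpr hmono]
        have hcod := Submodule.finrank_sup_add_finrank_inf_eq
          (U (N - r) ⊓ U' (N - s) ⊓ U'' (N - t)) (U'' (N - (t + 1)))
        rw [hXsub] at hcod
        have hsup : (U (N - r) ⊓ U' (N - s) ⊓ U'' (N - t)) ⊔ U'' (N - (t + 1)) ≤ U'' (N - t) :=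
          sup_le inf_le_right hmono
        have hsupr := Submodule.finrank_mono (s := (U (N - r) ⊓ U' (N - s) ⊓ U'' (N - t)) ⊔
          U'' (N - (t + 1))) (t := U'' (N - t)) hsup
        have e3 : Module.finrank F ↥(U'' (N - t)) = N - t + 1 := hU''.1 _ (by omega)
        have e4 : Module.finrank F ↥(U'' (N - (t + 1))) = N - (t + 1) + 1 := hU''.1 _ (by omega)
        have ihh := ih r s (t + 1) hr hs ht1 (by omega)
        omega

lemma BA.finrank_eq {N : ℕ} [FiniteDimensional F V]
    (hV : Module.finrank F V = N + 1) {U U' U'' : ℕ → Submodule F V}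
    (hU : BA.IsFlag N U) (hU' : BA.IsFlag N U') (hU'' : BA.IsFlag N U'')
    (hT : BA.TotallyOpposite N U U' U'')
    (r s t : ℕ) (hsum : r + s + t = N) :
    Module.finrank F ↥(U (N - r) ⊓ U' (N - s) ⊓ U'' (N - t)) = 1 := by
  have h1 := BA.finrank_le_aux hU hU' hU'' hT N r s t (by omega) (by omega) (by omega) (by omega)
  have h2 := BA.finrank_ge hV hU hU' hU'' r s t (by omega) (by omega) (by omega)
  omega

/-- Abstract independence criterion. -/
lemma BA.indep_aux [FiniteDimensional F V] {ι : Type*} (D : ι → Submodule F V)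
    (Q : ℕ → Submodule F V) (f : ι → ℕ) (hf : Function.Injective f)
    (hD1 : ∀ i, Module.finrank F (D i) = 1)
    (hDQ : ∀ i, D i ≤ Q (f i))
    (hQle : ∀ i j : ι, f i < f j → Q (f i) ≤ Q (f j - 1))
    (hbot : ∀ i : ι, 0 < f i → D i ⊓ Q (f i - 1) = ⊥) :
    iSupIndep D := by
  classical
  have hne : ∀ i, ∃ w ∈ D i, w ≠ 0 := by
    intro i
    refine (Submodule.ne_bot_iff (D i)).mp ?_
    intro h
    have := hD1 i
    rw [h] at this
    simp [finrank_bot] at this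
  choose w hw hw0 using hne
  have hspan : ∀ i, D i = Submodule.span F {w i} := by
    intro i
    refine (Submodule.eq_of_le_of_finrank_eq
      ((Submodule.span_singleton_le_iff_mem _ _).mpr (hw i)) ?_).symm
    rw [finrank_span_singleton (hw0 i), hD1 i]
  have key : ∀ s : Finset ι, ∀ g : ι → F, (∑ j ∈ s, g j • w j) = 0 → ∀ i ∈ s, g i = 0 := by
    intro s
    induction s using Finset.strongInduction with
    | _ s ihs =>
      intro g hg i hi
      obtain ⟨i0, hi0, hmax⟩ := Finset.exists_max_image s f ⟨i, hi⟩
      have hsum' : g i0 • w i0 = - ∑ j ∈ s.erase i0, g j • w j := by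
        have h2 := Finset.add_sum_erase s (fun j => g j • w j) hi0
        beta_reduce at h2
        exact eq_neg_of_add_eq_zero_left (h2.trans hg)
      have hg0 : g i0 = 0 := by
        by_cases h0 : 0 < f i0
        · have hQmem : ∀ j ∈ s.erase i0, g j • w j ∈ Q (f i0 - 1) := by
            intro j hj
            have hjs := Finset.mem_of_mem_erase hj
            have hjne := Finset.ne_of_mem_erase hj
            have hlt : f j < f i0 := lt_of_le_of_ne (hmax j hjs) fun h => hjne (hf h)
            exact Submodule.smul_mem _ _ (hQle j i0 hlt (hDQ j (hw j)))
          have hmem : g i0 • w i0 ∈ D i0 ⊓ Q (f i0 - 1) := by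
            refine Submodule.mem_inf.mpr ⟨Submodule.smul_mem _ _ (hw i0), ?_⟩
            rw [hsum']
            exact Submodule.neg_mem _ (Submodule.sum_mem _ hQmem)
          rw [hbot i0 h0] at hmem
          rcases smul_eq_zero.mp ((Submodule.mem_bot F).mp hmem) with h | h
          · exact h
          · exact absurd h (hw0 i0)
        · have hempty : s.erase i0 = ∅ := by
            rw [Finset.eq_empty_iff_forall_notMem]
            intro j hj
            have hle := hmax j (Finset.mem_of_mem_erase hj)
            exact Finset.ne_of_mem_erase hj (hf (by omega))
          rw [hempty, Finset.sum_empty, neg_zero] at hsum'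
          rcases smul_eq_zero.mp hsum' with h | h
          · exact h
          · exact absurd h (hw0 i0)
      by_cases hii : i = i0
      · rwa [hii]
      · refine ihs (s.erase i0) (Finset.erase_ssubset hi0) g ?_ i
          (Finset.mem_erase.mpr ⟨hii, hi⟩)
        have := hsum'
        rw [hg0, zero_smul] at this
        exact (neg_eq_zero.mp this.symm)
  have hli : LinearIndependent F w := linearIndependent_iff'.mpr key
  have : D = fun i => Submodule.span F {w i} := funext hspan
  rw [this]
  exact hli.iSupIndep_span_singleton

end Aux

/-- Given totally opposite flags `{U_i}, {U'_i}, {U''_i}` on an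
`(N+1)`-dimensional vector space `V`, the assignment
`(r,s,t) ↦ U_{N-r} ∩ U'_{N-s} ∩ U''_{N-t}` is a Billiard Array on `V`. -/
theorem stmt11 {F V : Type*} [Field F] [AddCommGroup V] [Module F V] (N : ℕ)
    (hV : Module.finrank F V = N + 1) (U U' U'' : ℕ → Submodule F V)
    (hU : BA.IsFlag N U) (hU' : BA.IsFlag N U') (hU'' : BA.IsFlag N U'')
    (hT : BA.TotallyOpposite N U U' U'') :
    BA.IsBilliardArray N
      (fun v => U (N - v 0) ⊓ U' (N - v 1) ⊓ U'' (N - v 2)) := by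
  haveI : FiniteDimensional F V := FiniteDimensional.of_finrank_pos (by omega)
  refine ⟨?_, ?_, ?_⟩
  · intro v hv
    have hv' : v 0 + v 1 + v 2 = N := hv
    exact BA.finrank_eq hV hU hU' hU'' hT (v 0) (v 1) (v 2) hv'
  · rintro L ⟨η, c, hc, rfl⟩
    fin_cases η
    · -- η = 0 : vary x 1
      refine BA.indep_aux _ (fun m => U'' (c + m)) (fun x => x.1 1) ?_ ?_ ?_ ?_ ?_
      · intro x y h
        obtain ⟨hxm, hx0⟩ := x.2
        obtain ⟨hym, hy0⟩ := y.2
        have hxm' : x.1 0 + x.1 1 + x.1 2 = N := hxm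
        have hym' : y.1 0 + y.1 1 + y.1 2 = N := hym
        apply Subtype.ext; funext i; fin_cases i <;> simp_all <;> omega
      · intro x
        obtain ⟨hxm, hx0⟩ := x.2
        exact BA.finrank_eq hV hU hU' hU'' hT _ _ _ hxm
      · intro x
        obtain ⟨hxm, hx0⟩ := x.2
        have hxm' : x.1 0 + x.1 1 + x.1 2 = N := hxm
        have hx0' : x.1 0 = c := hx0
        show U (N - x.1 0) ⊓ U' (N - x.1 1) ⊓ U'' (N - x.1 2) ≤ U'' (c + x.1 1)
        have e : c + x.1 1 = N - x.1 2 := by omega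
        rw [e]
        exact inf_le_right
      · intro x y hlt
        have hlt' : x.1 1 < y.1 1 := hlt
        clear hlt
        obtain ⟨hym, hy0⟩ := y.2
        have hym' : y.1 0 + y.1 1 + y.1 2 = N := hym
        have hy0' : y.1 0 = c := hy0
        show U'' (c + x.1 1) ≤ U'' (c + (y.1 1 - 1))
        exact BA.flag_mono hU'' (by omega) (by omega)
      · intro x h0
        obtain ⟨hxm, hx0⟩ := x.2
        have hxm' : x.1 0 + x.1 1 + x.1 2 = N := hxm
        have hx0' : x.1 0 = c := hx0
        have h0' : 0 < x.1 1 := h0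
        clear h0
        show U (N - x.1 0) ⊓ U' (N - x.1 1) ⊓ U'' (N - x.1 2) ⊓ U'' (c + (x.1 1 - 1)) = ⊥
        have htrip := hT c (x.1 1) (x.1 2 + 1) hc (by omega) (by omega) (by omega)
        rw [eq_bot_iff, ← htrip]
        refine le_inf (le_inf ?_ ?_) ?_
        · refine inf_le_left.trans (inf_le_left.trans (inf_le_left.trans (le_of_eq ?_)))
          rw [hx0']
        · exact inf_le_left.trans (inf_le_left.trans inf_le_right)
        · refine inf_le_right.trans (le_of_eq ?_)
          rw [show c + (x.1 1 - 1) = N - (x.1 2 + 1) by omega]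
    · -- η = 1 : vary x 2
      refine BA.indep_aux _ (fun m => U (c + m)) (fun x => x.1 2) ?_ ?_ ?_ ?_ ?_
      · intro x y h
        obtain ⟨hxm, hx1⟩ := x.2
        obtain ⟨hym, hy1⟩ := y.2
        have hxm' : x.1 0 + x.1 1 + x.1 2 = N := hxm
        have hym' : y.1 0 + y.1 1 + y.1 2 = N := hym
        apply Subtype.ext; funext i; fin_cases i <;> simp_all <;> omega
      · intro x
        obtain ⟨hxm, hx1⟩ := x.2
        exact BA.finrank_eq hV hU hU' hU'' hT _ _ _ hxm
      · intro x
        obtain ⟨hxm, hx1⟩ := x.2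
        have hxm' : x.1 0 + x.1 1 + x.1 2 = N := hxm
        have hx1' : x.1 1 = c := hx1
        show U (N - x.1 0) ⊓ U' (N - x.1 1) ⊓ U'' (N - x.1 2) ≤ U (c + x.1 2)
        have e : c + x.1 2 = N - x.1 0 := by omega
        rw [e]
        exact inf_le_left.trans inf_le_left
      · intro x y hlt
        have hlt' : x.1 2 < y.1 2 := hlt
        clear hlt
        obtain ⟨hym, hy1⟩ := y.2
        have hym' : y.1 0 + y.1 1 + y.1 2 = N := hym
        have hy1' : y.1 1 = c := hy1
        show U (c + x.1 2) ≤ U (c + (y.1 2 - 1))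
        exact BA.flag_mono hU (by omega) (by omega)
      · intro x h0
        obtain ⟨hxm, hx1⟩ := x.2
        have hxm' : x.1 0 + x.1 1 + x.1 2 = N := hxm
        have hx1' : x.1 1 = c := hx1
        have h0' : 0 < x.1 2 := h0
        clear h0
        show U (N - x.1 0) ⊓ U' (N - x.1 1) ⊓ U'' (N - x.1 2) ⊓ U (c + (x.1 2 - 1)) = ⊥
        have htrip := hT (x.1 0 + 1) c (x.1 2) (by omega) hc (by omega) (by omega)
        rw [eq_bot_iff, ← htrip]
        refine le_inf (le_inf ?_ ?_) ?_
        · refine inf_le_right.trans (le_of_eq ?_)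
          rw [show c + (x.1 2 - 1) = N - (x.1 0 + 1) by omega]
        · refine inf_le_left.trans (inf_le_left.trans (inf_le_right.trans (le_of_eq ?_)))
          rw [hx1']
        · exact inf_le_left.trans inf_le_right
    · -- η = 2 : vary x 0
      refine BA.indep_aux _ (fun m => U' (c + m)) (fun x => x.1 0) ?_ ?_ ?_ ?_ ?_
      · intro x y h
        obtain ⟨hxm, hx2⟩ := x.2
        obtain ⟨hym, hy2⟩ := y.2
        have hxm' : x.1 0 + x.1 1 + x.1 2 = N := hxm
        have hym' : y.1 0 + y.1 1 + y.1 2 = N := hym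
        apply Subtype.ext; funext i; fin_cases i <;> simp_all <;> omega
      · intro x
        obtain ⟨hxm, hx2⟩ := x.2
        exact BA.finrank_eq hV hU hU' hU'' hT _ _ _ hxm
      · intro x
        obtain ⟨hxm, hx2⟩ := x.2
        have hxm' : x.1 0 + x.1 1 + x.1 2 = N := hxm
        have hx2' : x.1 2 = c := hx2
        show U (N - x.1 0) ⊓ U' (N - x.1 1) ⊓ U'' (N - x.1 2) ≤ U' (c + x.1 0)
        have e : c + x.1 0 = N - x.1 1 := by omega
        rw [e]
        exact inf_le_left.trans inf_le_right
      · intro x y hlt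
        have hlt' : x.1 0 < y.1 0 := hlt
        clear hlt
        obtain ⟨hym, hy2⟩ := y.2
        have hym' : y.1 0 + y.1 1 + y.1 2 = N := hym
        have hy2' : y.1 2 = c := hy2
        show U' (c + x.1 0) ≤ U' (c + (y.1 0 - 1))
        exact BA.flag_mono hU' (by omega) (by omega)
      · intro x h0
        obtain ⟨hxm, hx2⟩ := x.2
        have hxm' : x.1 0 + x.1 1 + x.1 2 = N := hxm
        have hx2' : x.1 2 = c := hx2
        have h0' : 0 < x.1 0 := h0
        clear h0
        show U (N - x.1 0) ⊓ U' (N - x.1 1) ⊓ U'' (N - x.1 2) ⊓ U' (c + (x.1 0 - 1)) = ⊥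
        have htrip := hT (x.1 0) (x.1 1 + 1) c (by omega) (by omega) hc (by omega)
        rw [eq_bot_iff, ← htrip]
        refine le_inf (le_inf ?_ ?_) ?_
        · exact inf_le_left.trans (inf_le_left.trans inf_le_left)
        · refine inf_le_right.trans (le_of_eq ?_)
          rw [show c + (x.1 0 - 1) = N - (x.1 1 + 1) by omega]
        · refine inf_le_left.trans (inf_le_right.trans (le_of_eq ?_))
          rw [hx2']
  · intro r s t hrst hindep
    have hrN : r ≤ N := by omega
    have hsN : s ≤ N := by omega
    have htN : t ≤ N := by omega
    -- the ambient 2-dimensional space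
    set T := U (N - r) ⊓ U' (N - s) ⊓ U'' (N - t) with hTdef
    have hTle := BA.finrank_le_aux hU hU' hU'' hT N r s t hrN hsN htN (by omega)
    have hTrank : Module.finrank F ↥T ≤ 2 := by
      rw [hTdef]; omega
    -- each location of the black set lies in Δ_N
    have hD1 : ∀ x : ↥(BA.blackSet r s t),
        Module.finrank F ↥(U (N - x.1 0) ⊓ U' (N - x.1 1) ⊓ U'' (N - x.1 2)) = 1 := by
      rintro ⟨x, hx⟩
      simp only [BA.blackSet, Set.mem_insert_iff, Set.mem_singleton_iff] at hx
      rcases hx with h | h | h <;> subst h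
      · exact BA.finrank_eq hV hU hU' hU'' hT (r + 1) s t (by omega)
      · exact BA.finrank_eq hV hU hU' hU'' hT r (s + 1) t (by omega)
      · exact BA.finrank_eq hV hU hU' hU'' hT r s (t + 1) (by omega)
    have hne : ∀ x : ↥(BA.blackSet r s t),
        ∃ w ∈ U (N - x.1 0) ⊓ U' (N - x.1 1) ⊓ U'' (N - x.1 2), w ≠ 0 := by
      intro x
      refine (Submodule.ne_bot_iff _).mp ?_
      intro h
      have := hD1 x
      rw [h] at this
      simp [finrank_bot] at this
    choose w hw hw0 using hne
    have hli : LinearIndependent F w :=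
      hindep.linearIndependent _ (fun x => hw x) (fun x => hw0 x)
    -- the three elements
    have hm1 : ![r + 1, s, t] ∈ BA.blackSet r s t := Or.inl rfl
    have hm2 : ![r, s + 1, t] ∈ BA.blackSet r s t := Or.inr (Or.inl rfl)
    have hm3 : ![r, s, t + 1] ∈ BA.blackSet r s t := Or.inr (Or.inr rfl)
    set e : Fin 3 → ↥(BA.blackSet r s t) := ![⟨_, hm1⟩, ⟨_, hm2⟩, ⟨_, hm3⟩] with hedef
    have he : Function.Injective e := by
      intro a b hab
      have h0 := congrFun (Subtype.ext_iff.mp hab) 0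
      have h1 := congrFun (Subtype.ext_iff.mp hab) 1
      fin_cases a <;> fin_cases b <;> simp [hedef] at h0 h1 ⊢ <;> omega
    -- each of the three subspaces is contained in T
    have hle : ∀ x : ↥(BA.blackSet r s t),
        U (N - x.1 0) ⊓ U' (N - x.1 1) ⊓ U'' (N - x.1 2) ≤ T := by
      rintro ⟨x, hx⟩
      simp only [BA.blackSet, Set.mem_insert_iff, Set.mem_singleton_iff] at hx
      rcases hx with h | h | h <;> subst h
      · show U (N - (r + 1)) ⊓ U' (N - s) ⊓ U'' (N - t) ≤ T
        exact inf_le_inf (inf_le_inf (BA.flag_mono hU (by omega) (by omega)) le_rfl) le_rfl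
      · show U (N - r) ⊓ U' (N - (s + 1)) ⊓ U'' (N - t) ≤ T
        exact inf_le_inf (inf_le_inf le_rfl (BA.flag_mono hU' (by omega) (by omega))) le_rfl
      · show U (N - r) ⊓ U' (N - s) ⊓ U'' (N - (t + 1)) ≤ T
        exact inf_le_inf le_rfl (BA.flag_mono hU'' (by omega) (by omega))
    have hmemT : ∀ i : Fin 3, w (e i) ∈ T := fun i => hle (e i) (hw (e i))
    set v' : Fin 3 → ↥T := fun i => ⟨w (e i), hmemT i⟩ with hv'def
    have hv'li : LinearIndependent F v' := by
      apply LinearIndependent.of_comp T.subtype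
      have : T.subtype ∘ v' = w ∘ e := rfl
      rw [this]
      exact hli.comp e he
    have hcard := hv'li.fintype_card_le_finrank
    simp [Fintype.card_fin] at hcard
    omega
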